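/- Let k ≥ 1 and let φ, φ' be Boolean functions on V = {0,...,k}. Then eul(φ) = eul(φ') if and only if φ ≃ φ'. (In other words, the equivalence classes of ≃ correspond exactly to the possible values of the Euler characteristic.) -/

import Mathlib

open scoped Classical

/-- Flip the membership of variable `l` in valuation `ν`. -/
def flipV {k : ℕ} (ν : Finset (Fin (k + 1))) (l : Fin (k + 1)) : Finset (Fin (k + 1)) :=
  if l ∈ ν then ν.erase l else insert l ν

/-- The set of satisfying valuations of a Boolean function on `V = {0,...,k}`. -/
def satSet {k : ℕ} (φ : Finset (Fin (k + 1)) → Bool) : Finset (Finset (Fin (k + 1))) :=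
  Finset.univ.filter (fun ν => φ ν = true)

/-- The Euler characteristic of a Boolean function: `Σ_{ν ⊨ φ} (-1)^{|ν|}`. -/
def eul {k : ℕ} (φ : Finset (Fin (k + 1)) → Bool) : ℤ :=
  ∑ ν ∈ satSet φ, (-1 : ℤ) ^ ν.card

/-- `φ →+ φ'`: there are `ν, l` with `ν ∉ sat(φ)`, `ν^(l) ∉ sat(φ)` and
`sat(φ') = sat(φ) ∪ {ν, ν^(l)}`. -/
def StepPlus (k : ℕ) (φ φ' : Finset (Fin (k + 1)) → Bool) : Prop :=
  ∃ (ν : Finset (Fin (k + 1))) (l : Fin (k + 1)),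
    φ ν = false ∧ φ (flipV ν l) = false ∧
    ∀ μ, (φ' μ = true ↔ φ μ = true ∨ μ = ν ∨ μ = flipV ν l)

/-- `φ →− φ'`: remove two adjacent satisfying valuations. -/
def StepMinus (k : ℕ) (φ φ' : Finset (Fin (k + 1)) → Bool) : Prop :=
  StepPlus k φ' φ

/-- `φ →± φ'`. -/
def StepPM (k : ℕ) (φ φ' : Finset (Fin (k + 1)) → Bool) : Prop :=
  StepPlus k φ φ' ∨ StepMinus k φ φ'

/-- The relation `≃` (equivalently `→±*`): the reflexive transitive closure of `→±`. -/
def EquivPM (k : ℕ) (φ φ' : Finset (Fin (k + 1)) → Bool) : Prop :=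
  Relation.ReflTransGen (StepPM k) φ φ'

namespace Stmt11Aux

variable {k : ℕ}

lemma mem_satSet {φ : Finset (Fin (k+1)) → Bool} {ν} : ν ∈ satSet φ ↔ φ ν = true := by
  simp [satSet]

lemma flipV_card (ν : Finset (Fin (k+1))) (l) :
    ν.card = (flipV ν l).card + 1 ∨ (flipV ν l).card = ν.card + 1 := by
  by_cases h : l ∈ ν
  · left
    have hpos : 0 < ν.card := Finset.card_pos.2 ⟨l, h⟩
    simp [flipV, h, Finset.card_erase_of_mem h]
    omega
  · right; simp [flipV, h, Finset.card_insert_of_notMem h]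

lemma flipV_parity (ν : Finset (Fin (k+1))) (l) :
    (flipV ν l).card % 2 = (ν.card + 1) % 2 := by
  rcases flipV_card ν l with h | h <;> omega

lemma flipV_ne (ν : Finset (Fin (k+1))) (l) : flipV ν l ≠ ν := by
  intro h
  have := flipV_parity ν l
  rw [h] at this
  omega

lemma flipV_flipV (ν : Finset (Fin (k+1))) (l) : flipV (flipV ν l) l = ν := by
  by_cases h : l ∈ ν
  · have : l ∉ ν.erase l := Finset.notMem_erase l ν
    simp [flipV, h, this, Finset.insert_erase h]
  · have : l ∈ insert l ν := Finset.mem_insert_self l ν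
    simp [flipV, h, this, Finset.erase_insert h]

lemma mem_flipV {ν : Finset (Fin (k+1))} {l x} :
    x ∈ flipV ν l ↔ (x ∈ ν ∧ x ≠ l) ∨ (x = l ∧ l ∉ ν) := by
  by_cases h : l ∈ ν <;> by_cases hx : x = l <;>
    simp [flipV, h, hx, Finset.mem_erase, Finset.mem_insert] <;> tauto

lemma symmDiff_flipV_self (ν : Finset (Fin (k+1))) (l) :
    symmDiff (flipV ν l) ν = {l} := by
  ext x
  simp only [Finset.mem_symmDiff, mem_flipV, Finset.mem_singleton]
  by_cases hx : x = l <;> subst_eqs <;> tauto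

lemma flipV_inj {ν : Finset (Fin (k+1))} {l m} (h : flipV ν l = flipV ν m) : l = m := by
  have h1 := symmDiff_flipV_self ν l
  have h2 := symmDiff_flipV_self ν m
  rw [h] at h1
  rw [h1] at h2
  simpa using h2

lemma symmDiff_flipV (ν μ : Finset (Fin (k+1))) {l} (h : l ∈ symmDiff ν μ) :
    symmDiff (flipV ν l) μ = (symmDiff ν μ).erase l := by
  ext x
  simp only [Finset.mem_symmDiff, mem_flipV, Finset.mem_erase] at *
  by_cases hx : x = l <;> subst_eqs <;> tauto

lemma eq_of_symmDiff_empty {ν μ : Finset (Fin (k+1))} (h : symmDiff ν μ = ∅) : ν = μ := by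
  ext x
  have := Finset.ext_iff.1 h x
  simp [Finset.mem_symmDiff] at this
  tauto

lemma symmDiff_card_pos {ν μ : Finset (Fin (k+1))} (h : ν ≠ μ) :
    0 < (symmDiff ν μ).card := by
  rcases Finset.eq_empty_or_nonempty (symmDiff ν μ) with he | hne
  · exact absurd (eq_of_symmDiff_empty he) h
  · exact Finset.card_pos.2 hne

end Stmt11Aux

namespace Stmt11Aux2
open Stmt11Aux

variable {k : ℕ}

lemma equiv_symm {φ φ' : Finset (Fin (k+1)) → Bool} (h : EquivPM k φ φ') : EquivPM k φ' φ := by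
  have hs : Symmetric (StepPM k) := by
    intro a b hab
    rcases hab with h1 | h1
    · exact Or.inr h1
    · exact Or.inl h1
  exact (@Relation.ReflTransGen.symmetric _ _ ⟨fun _ _ h => hs h⟩).symm _ _ h

lemma equiv_trans {φ₁ φ₂ φ₃ : Finset (Fin (k+1)) → Bool}
    (h1 : EquivPM k φ₁ φ₂) (h2 : EquivPM k φ₂ φ₃) : EquivPM k φ₁ φ₃ :=
  Relation.ReflTransGen.trans h1 h2

lemma neg_one_pow_flipV (ν : Finset (Fin (k+1))) (l) :
    (-1 : ℤ) ^ (flipV ν l).card = -(-1 : ℤ) ^ ν.card := by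
  rcases flipV_card ν l with h | h
  · rw [h, pow_succ]; ring
  · rw [h, pow_succ]; ring

lemma eul_stepPlus {φ φ' : Finset (Fin (k+1)) → Bool} (h : StepPlus k φ φ') :
    eul φ' = eul φ := by
  obtain ⟨ν, l, h1, h2, h3⟩ := h
  have hne : ν ≠ flipV ν l := (flipV_ne ν l).symm
  have hsat : satSet φ' = insert ν (insert (flipV ν l) (satSet φ)) := by
    ext μ
    simp only [mem_satSet, Finset.mem_insert, h3 μ]
    tauto
  have hν : ν ∉ insert (flipV ν l) (satSet φ) := by
    simp [mem_satSet, h1, hne]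
  have hfl : flipV ν l ∉ satSet φ := by simp [mem_satSet, h2]
  rw [eul, hsat, Finset.sum_insert hν, Finset.sum_insert hfl, neg_one_pow_flipV]
  simp [eul]

lemma eul_eq_of_equiv {φ φ' : Finset (Fin (k+1)) → Bool} (h : EquivPM k φ φ') :
    eul φ = eul φ' := by
  induction h with
  | refl => rfl
  | tail _ hstep ih =>
      rcases hstep with hs | hs
      · rw [ih, (eul_stepPlus hs).symm]
      · rw [ih, eul_stepPlus hs]

/-- Cancel: remove an adjacent satisfying pair. -/
lemma cancel_step {φ : Finset (Fin (k+1)) → Bool} {ν l}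
    (h1 : φ ν = true) (h2 : φ (flipV ν l) = true) :
    ∃ φ₂ : Finset (Fin (k+1)) → Bool, EquivPM k φ φ₂ ∧
      ∀ μ, φ₂ μ = true ↔ (φ μ = true ∧ μ ≠ ν ∧ μ ≠ flipV ν l) := by
  refine ⟨fun μ => decide (φ μ = true ∧ μ ≠ ν ∧ μ ≠ flipV ν l), ?_, ?_⟩
  · refine Relation.ReflTransGen.single (Or.inr ?_)
    refine ⟨ν, l, ?_, ?_, ?_⟩
    · simp
    · simp [flipV_ne]
    · intro μ
      simp only [decide_eq_true_eq]
      by_cases hμν : μ = ν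
      · subst hμν; simp [h1]
      · by_cases hμf : μ = flipV ν l
        · subst hμf; simp [h2]
        · simp [hμν, hμf]
  · intro μ; simp

/-- Swap: move a satisfying valuation two steps, to `x2 = flipV (flipV ν l) m`,
provided the intermediate and target are free. -/
lemma swap_step {φ : Finset (Fin (k+1)) → Bool} {ν l m}
    (h1 : φ ν = true) (h2 : φ (flipV ν l) = false)
    (h3 : φ (flipV (flipV ν l) m) = false)
    (hne : flipV (flipV ν l) m ≠ ν) :
    ∃ φ₂ : Finset (Fin (k+1)) → Bool, EquivPM k φ φ₂ ∧
      ∀ μ, φ₂ μ = true ↔ ((φ μ = true ∧ μ ≠ ν) ∨ μ = flipV (flipV ν l) m) := by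
  set α := flipV ν l with hα
  set β := flipV α m with hβ
  have hβα : β ≠ α := flipV_ne α m
  have hαν : α ≠ ν := flipV_ne ν l
  -- first add {α, β}, then remove {ν, α}
  set φ₁ : Finset (Fin (k+1)) → Bool := fun μ => decide (φ μ = true ∨ μ = α ∨ μ = β) with hφ₁
  set φ₂ : Finset (Fin (k+1)) → Bool := fun μ => decide ((φ μ = true ∧ μ ≠ ν) ∨ μ = β) with hφ₂
  have step1 : StepPlus k φ φ₁ := by
    refine ⟨α, m, h2, h3, ?_⟩
    intro μ; simp [hφ₁, ← hβ]
  have step2 : StepMinus k φ₁ φ₂ := by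
    refine ⟨ν, l, ?_, ?_, ?_⟩
    · simp only [hφ₂, decide_eq_true_eq]
      simp [hne.symm]
    · simp only [hφ₂, decide_eq_true_eq]
      rw [← hα]
      simp [h2, hβα.symm]
    · intro μ
      simp only [hφ₁, hφ₂, decide_eq_true_eq]
      rw [← hα]
      constructor
      · rintro (hφ | hμ | hμ)
        · by_cases hμν : μ = ν
          · tauto
          · tauto
        · tauto
        · tauto
      · rintro ((⟨hφ, _⟩ | hμ) | hμ | hμ)
        · tauto
        · tauto
        · subst hμ; tauto
        · subst hμ
          by_cases hαβ : α = β
          · tauto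
          · tauto
  refine ⟨φ₂, ?_, ?_⟩
  · exact Relation.ReflTransGen.head (Or.inl step1) (Relation.ReflTransGen.single (Or.inr step2))
  · intro μ; simp [hφ₂]

end Stmt11Aux2

namespace Stmt11Aux3
open Stmt11Aux Stmt11Aux2

variable {k : ℕ}

lemma card_cancel {φ φ₂ : Finset (Fin (k+1)) → Bool} {a b : Finset (Fin (k+1))}
    (ha : φ a = true) (hb : φ b = true) (hab : a ≠ b)
    (h : ∀ μ, φ₂ μ = true ↔ (φ μ = true ∧ μ ≠ a ∧ μ ≠ b)) :
    (satSet φ₂).card + 2 = (satSet φ).card := by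
  have hsat : satSet φ = insert a (insert b (satSet φ₂)) := by
    ext μ
    simp only [mem_satSet, Finset.mem_insert, h μ]
    by_cases h1 : μ = a
    · subst h1; simp [ha]
    · by_cases h2 : μ = b
      · subst h2; simp [hb]
      · simp [h1, h2]
  have hb2 : b ∉ satSet φ₂ := by simp [mem_satSet, h b, hab]
  have ha2 : a ∉ insert b (satSet φ₂) := by
    simp [mem_satSet, h a, hab]
  rw [hsat, Finset.card_insert_of_notMem ha2, Finset.card_insert_of_notMem hb2]

lemma card_swap {φ φ₂ : Finset (Fin (k+1)) → Bool} {ν β : Finset (Fin (k+1))}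
    (hν : φ ν = true) (hβ : φ β = false)
    (h : ∀ μ, φ₂ μ = true ↔ ((φ μ = true ∧ μ ≠ ν) ∨ μ = β)) :
    (satSet φ₂).card = (satSet φ).card := by
  have hνβ : ν ≠ β := by rintro rfl; rw [hν] at hβ; exact Bool.noConfusion hβ
  have hsat : satSet φ₂ = insert β ((satSet φ).erase ν) := by
    ext μ
    simp only [mem_satSet, Finset.mem_insert, Finset.mem_erase, h μ]
    by_cases h1 : μ = β
    · simp [h1]
    · simp [h1]; tauto
  have hβe : β ∉ (satSet φ).erase ν := by
    simp [Finset.mem_erase, mem_satSet, hβ]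
  have hνe : ν ∈ satSet φ := mem_satSet.2 hν
  rw [hsat, Finset.card_insert_of_notMem hβe, Finset.card_erase_of_mem hνe]
  have : 0 < (satSet φ).card := Finset.card_pos.2 ⟨ν, hνe⟩
  omega

lemma mixed_reduce (d : ℕ) : ∀ (φ : Finset (Fin (k+1)) → Bool) (ν μ : Finset (Fin (k+1))),
    φ ν = true → φ μ = true → ν.card % 2 ≠ μ.card % 2 → (symmDiff ν μ).card = d →
    ∃ φ₂, EquivPM k φ φ₂ ∧ (satSet φ₂).card + 2 = (satSet φ).card := by
  induction d using Nat.strong_induction_on with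
  | _ d ih =>
  intro φ ν μ h1 h2 hpar hd
  have hνμ : ν ≠ μ := by rintro rfl; exact hpar rfl
  have hdpos : 0 < d := hd ▸ symmDiff_card_pos hνμ
  obtain ⟨l, hl⟩ : (symmDiff ν μ).Nonempty := Finset.card_pos.1 (hd ▸ hdpos)
  set α := flipV ν l with hα
  have hsdα : symmDiff α μ = (symmDiff ν μ).erase l := symmDiff_flipV ν μ hl
  have hcardα : (symmDiff α μ).card = d - 1 := by
    rw [hsdα, Finset.card_erase_of_mem hl, hd]
  by_cases hαμ : α = μ
  · -- ν and μ are adjacent: cancel them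
    have hflμ : φ (flipV ν l) = true := by rw [← hα, hαμ]; exact h2
    obtain ⟨φ₂, hequiv, hiff⟩ := cancel_step (k := k) h1 hflμ
    exact ⟨φ₂, hequiv, card_cancel h1 hflμ (flipV_ne ν l).symm hiff⟩
  · by_cases hαsat : φ α = true
    · -- ν and α are adjacent, both satisfying: cancel them
      obtain ⟨φ₂, hequiv, hiff⟩ := cancel_step (k := k) h1 hαsat
      exact ⟨φ₂, hequiv, card_cancel h1 hαsat (flipV_ne ν l).symm hiff⟩
    · have hαfalse : φ α = false := by
        cases hc : φ α
        · rfl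
        · exact absurd hc hαsat
      have hαμne : (symmDiff α μ).Nonempty := by
        apply Finset.card_pos.1
        exact symmDiff_card_pos hαμ
      obtain ⟨m, hm⟩ := hαμne
      set β := flipV α m with hβ
      have hml : m ≠ l := by
        rintro rfl
        rw [hsdα] at hm
        exact (Finset.notMem_erase m _) hm
      have hβν : β ≠ ν := by
        intro hcon
        have hνα : flipV α l = ν := by rw [hα, flipV_flipV]
        have : flipV α m = flipV α l := by rw [← hβ, hcon, hνα]
        exact hml (flipV_inj this)
      have hβpar : β.card % 2 = ν.card % 2 := by
        have p1 := flipV_parity ν l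
        have p2 := flipV_parity α m
        rw [← hα] at p1
        rw [← hβ] at p2
        omega
      have hsdβ : (symmDiff β μ).card = d - 2 := by
        rw [hβ, symmDiff_flipV α μ hm, Finset.card_erase_of_mem hm, hcardα]
        omega
      have hd2 : d - 2 < d := by omega
      have hβμpar : β.card % 2 ≠ μ.card % 2 := by rw [hβpar]; exact hpar
      by_cases hβsat : φ β = true
      · exact ih (d - 2) hd2 φ β μ hβsat h2 hβμpar hsdβ
      · have hβfalse : φ β = false := by
          cases hc : φ β
          · rfl
          · exact absurd hc hβsat
        obtain ⟨φ', hequiv', hiff'⟩ := swap_step (k := k) h1 hαfalse (by rw [← hα]; exact hβfalse)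
          (by rw [← hα, ← hβ]; exact hβν)
        rw [← hα, ← hβ] at hiff'
        have hcard' : (satSet φ').card = (satSet φ).card := card_swap h1 hβfalse hiff'
        have hφ'β : φ' β = true := (hiff' β).2 (Or.inr rfl)
        have hφ'μ : φ' μ = true := by
          refine (hiff' μ).2 (Or.inl ⟨h2, ?_⟩)
          exact hνμ.symm
        obtain ⟨φ₂, hequiv₂, hcard₂⟩ := ih (d - 2) hd2 φ' β μ hφ'β hφ'μ hβμpar hsdβ
        exact ⟨φ₂, equiv_trans hequiv' hequiv₂, by omega⟩

end Stmt11Aux3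

namespace Stmt11Aux4
open Stmt11Aux Stmt11Aux2 Stmt11Aux3

variable {k : ℕ}

/-- Move a satisfying valuation `ν` to an unoccupied target `β` of the same parity,
assuming all satisfying valuations have the parity of `ν`. -/
lemma move (d : ℕ) : ∀ (ψ : Finset (Fin (k+1)) → Bool) (ν β : Finset (Fin (k+1))),
    ψ ν = true → ψ β = false → ν.card % 2 = β.card % 2 →
    (∀ x, ψ x = true → x.card % 2 = ν.card % 2) →
    (symmDiff ν β).card = d →
    ∃ ψ₂, EquivPM k ψ ψ₂ ∧ ∀ μ, ψ₂ μ = true ↔ ((ψ μ = true ∧ μ ≠ ν) ∨ μ = β) := by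
  induction d using Nat.strong_induction_on with
  | _ d ih =>
  intro ψ ν β h1 h2 hpar hpure hd
  have hνβ : ν ≠ β := by rintro rfl; rw [h1] at h2; exact Bool.noConfusion h2
  have hdpos : 0 < d := hd ▸ symmDiff_card_pos hνβ
  obtain ⟨l, hl⟩ : (symmDiff ν β).Nonempty := Finset.card_pos.1 (hd ▸ hdpos)
  set α := flipV ν l with hα
  have hαpar : α.card % 2 ≠ ν.card % 2 := by
    have := flipV_parity ν l; rw [← hα] at this; omega
  have hαfalse : ψ α = false := by
    cases hc : ψ α
    · rfl
    · exact absurd (hpure α hc) hαpar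
  have hαβ : α ≠ β := by
    intro hcon; rw [hcon] at hαpar; omega
  have hsdα : symmDiff α β = (symmDiff ν β).erase l := symmDiff_flipV ν β hl
  have hcardα : (symmDiff α β).card = d - 1 := by
    rw [hsdα, Finset.card_erase_of_mem hl, hd]
  have hαβne : (symmDiff α β).Nonempty := Finset.card_pos.1 (symmDiff_card_pos hαβ)
  obtain ⟨m, hm⟩ := hαβne
  set x2 := flipV α m with hx2
  have hml : m ≠ l := by
    rintro rfl
    rw [hsdα] at hm
    exact (Finset.notMem_erase m _) hm
  have hx2ν : x2 ≠ ν := by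
    intro hcon
    have hνα : flipV α l = ν := by rw [hα, flipV_flipV]
    have : flipV α m = flipV α l := by rw [← hx2, hcon, hνα]
    exact hml (flipV_inj this)
  have hx2par : x2.card % 2 = ν.card % 2 := by
    have p2 := flipV_parity α m
    rw [← hx2] at p2
    omega
  have hsdx2 : (symmDiff x2 β).card = d - 2 := by
    rw [hx2, symmDiff_flipV α β hm, Finset.card_erase_of_mem hm, hcardα]
    omega
  have hd2 : d - 2 < d := by omega
  by_cases hx2β : x2 = β
  · -- single swap reaches β
    obtain ⟨ψ₂, hequiv, hiff⟩ := swap_step (k := k) h1 hαfalse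
      (by rw [← hα, ← hx2, hx2β]; exact h2) (by rw [← hα, ← hx2]; exact hx2ν)
    rw [← hα, ← hx2, hx2β] at hiff
    exact ⟨ψ₂, hequiv, hiff⟩
  · by_cases hx2sat : ψ x2 = true
    · -- x2 is occupied: first move x2 to β, then swap ν to x2
      have hx2pure : ∀ x, ψ x = true → x.card % 2 = x2.card % 2 := by
        intro x hx; rw [hx2par]; exact hpure x hx
      obtain ⟨ψ', hequiv', hiff'⟩ := ih (d - 2) hd2 ψ x2 β hx2sat h2
        (by rw [hx2par]; exact hpar) hx2pure hsdx2
      have hψ'ν : ψ' ν = true := (hiff' ν).2 (Or.inl ⟨h1, hx2ν.symm⟩)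
      have hψ'α : ψ' α = false := by
        cases hc : ψ' α
        · rfl
        · rcases (hiff' α).1 hc with ⟨hc2, _⟩ | hc2
          · rw [hαfalse] at hc2; exact Bool.noConfusion hc2
          · exact absurd hc2 hαβ
      have hψ'x2 : ψ' x2 = false := by
        cases hc : ψ' x2
        · rfl
        · rcases (hiff' x2).1 hc with ⟨_, hc2⟩ | hc2
          · exact absurd rfl hc2
          · exact absurd hc2 hx2β
      obtain ⟨ψ₂, hequiv₂, hiff₂⟩ := swap_step (k := k) hψ'ν
        (by rw [← hα]; exact hψ'α) (by rw [← hα, ← hx2]; exact hψ'x2)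
        (by rw [← hα, ← hx2]; exact hx2ν)
      rw [← hα, ← hx2] at hiff₂
      refine ⟨ψ₂, equiv_trans hequiv' hequiv₂, ?_⟩
      intro μ
      rw [hiff₂ μ]
      constructor
      · rintro (⟨hμ, hμν⟩ | hμ)
        · rcases (hiff' μ).1 hμ with ⟨hc, _⟩ | hc
          · exact Or.inl ⟨hc, hμν⟩
          · exact Or.inr hc
        · subst hμ; exact Or.inl ⟨hx2sat, hx2ν⟩
      · rintro (⟨hμ, hμν⟩ | hμ)
        · by_cases hμx2 : μ = x2
          · exact Or.inr hμx2
          · exact Or.inl ⟨(hiff' μ).2 (Or.inl ⟨hμ, hμx2⟩), hμν⟩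
        · exact Or.inl ⟨(hiff' μ).2 (Or.inr hμ), by rw [hμ]; exact hνβ.symm⟩
    · -- x2 is free: swap ν to x2, then move x2 to β
      have hx2false : ψ x2 = false := by
        cases hc : ψ x2
        · rfl
        · exact absurd hc hx2sat
      obtain ⟨ψ', hequiv', hiff'⟩ := swap_step (k := k) h1 hαfalse
        (by rw [← hα, ← hx2]; exact hx2false) (by rw [← hα, ← hx2]; exact hx2ν)
      rw [← hα, ← hx2] at hiff'
      have hψ'x2 : ψ' x2 = true := (hiff' x2).2 (Or.inr rfl)
      have hψ'β : ψ' β = false := by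
        cases hc : ψ' β
        · rfl
        · rcases (hiff' β).1 hc with ⟨hc2, _⟩ | hc2
          · rw [h2] at hc2; exact Bool.noConfusion hc2
          · exact absurd hc2.symm hx2β
      have hψ'pure : ∀ x, ψ' x = true → x.card % 2 = x2.card % 2 := by
        intro x hx
        rcases (hiff' x).1 hx with ⟨hc, _⟩ | hc
        · rw [hx2par]; exact hpure x hc
        · rw [hc]
      obtain ⟨ψ₂, hequiv₂, hiff₂⟩ := ih (d - 2) hd2 ψ' x2 β hψ'x2 hψ'β
        (by rw [hx2par]; exact hpar) hψ'pure hsdx2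
      refine ⟨ψ₂, equiv_trans hequiv' hequiv₂, ?_⟩
      intro μ
      rw [hiff₂ μ]
      constructor
      · rintro (⟨hμ, hμx2⟩ | hμ)
        · rcases (hiff' μ).1 hμ with ⟨hc, hcν⟩ | hc
          · exact Or.inl ⟨hc, hcν⟩
          · exact absurd hc hμx2
        · exact Or.inr hμ
      · rintro (⟨hμ, hμν⟩ | hμ)
        · have hμx2 : μ ≠ x2 := by
            rintro rfl; rw [hμ] at hx2false; exact Bool.noConfusion hx2false
          exact Or.inl ⟨(hiff' μ).2 (Or.inl ⟨hμ, hμν⟩), hμx2⟩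
        · exact Or.inr hμ

/-- Every function is equivalent to a "pure" one (all satisfying valuations of equal parity). -/
lemma normalize (n : ℕ) : ∀ (φ : Finset (Fin (k+1)) → Bool), (satSet φ).card = n →
    ∃ ψ, EquivPM k φ ψ ∧
      ∀ x ∈ satSet ψ, ∀ y ∈ satSet ψ, x.card % 2 = y.card % 2 := by
  induction n using Nat.strong_induction_on with
  | _ n ih =>
  intro φ hn
  by_cases hmix : ∃ x ∈ satSet φ, ∃ y ∈ satSet φ, x.card % 2 ≠ y.card % 2
  · obtain ⟨x, hx, y, hy, hxy⟩ := hmix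
    obtain ⟨φ₂, hequiv, hcard⟩ := mixed_reduce (symmDiff x y).card φ x y
      (mem_satSet.1 hx) (mem_satSet.1 hy) hxy rfl
    obtain ⟨ψ, hequiv₂, hpure⟩ := ih (satSet φ₂).card (by omega) φ₂ rfl
    exact ⟨ψ, equiv_trans hequiv hequiv₂, hpure⟩
  · push_neg at hmix
    exact ⟨φ, Relation.ReflTransGen.refl, hmix⟩

end Stmt11Aux4

namespace Stmt11Aux5
open Stmt11Aux Stmt11Aux2 Stmt11Aux3 Stmt11Aux4

variable {k : ℕ}

/-- Two pure functions whose satisfying sets lie in a common parity class and have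
equal cardinality are equivalent. -/
lemma match_pure (n : ℕ) : ∀ (ψ ψ' : Finset (Fin (k+1)) → Bool),
    (∀ x y : Finset (Fin (k+1)), (ψ x = true ∨ ψ' x = true) → (ψ y = true ∨ ψ' y = true) →
      x.card % 2 = y.card % 2) →
    (satSet ψ).card = (satSet ψ').card →
    (satSet ψ \ satSet ψ').card = n →
    EquivPM k ψ ψ' := by
  induction n using Nat.strong_induction_on with
  | _ n ih =>
  intro ψ ψ' H hcard hn
  rcases Nat.eq_zero_or_pos n with hz | hpos
  · -- satSet ψ ⊆ satSet ψ' and equal cards: the functions are equal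
    have hsub : satSet ψ ⊆ satSet ψ' := by
      rw [← Finset.sdiff_eq_empty_iff_subset]
      exact Finset.card_eq_zero.1 (hn.trans hz)
    have hseq : satSet ψ = satSet ψ' := Finset.eq_of_subset_of_card_le hsub (le_of_eq hcard.symm)
    have : ψ = ψ' := by
      funext x
      have := Finset.ext_iff.1 hseq x
      simp only [mem_satSet] at this
      cases hx : ψ x
      · cases hx' : ψ' x
        · rfl
        · rw [← this.2 hx', hx]
      · rw [this.1 hx]
    rw [this]
    exact Relation.ReflTransGen.refl
  · obtain ⟨ν, hν⟩ : (satSet ψ \ satSet ψ').Nonempty := Finset.card_pos.1 (hn ▸ hpos)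
    have hdiff' : (satSet ψ' \ satSet ψ).Nonempty := by
      rcases Finset.eq_empty_or_nonempty (satSet ψ' \ satSet ψ) with he | hne
      · exfalso
        have hsub : satSet ψ' ⊆ satSet ψ := Finset.sdiff_eq_empty_iff_subset.1 he
        have : satSet ψ' = satSet ψ := Finset.eq_of_subset_of_card_le hsub (le_of_eq hcard)
        rw [this] at hn
        simp at hn
        omega
      · exact hne
    obtain ⟨β, hβ⟩ := hdiff'
    rw [Finset.mem_sdiff, mem_satSet, mem_satSet] at hν hβ
    obtain ⟨hνψ, hνψ'⟩ := hν
    obtain ⟨hβψ', hβψ⟩ := hβ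
    have hβfalse : ψ β = false := by
      cases hc : ψ β
      · rfl
      · exact absurd hc hβψ
    have hpar : ν.card % 2 = β.card % 2 := H ν β (Or.inl hνψ) (Or.inr hβψ')
    have hpure : ∀ x, ψ x = true → x.card % 2 = ν.card % 2 :=
      fun x hx => H x ν (Or.inl hx) (Or.inl hνψ)
    obtain ⟨ψ₂, hequiv, hiff⟩ := move (symmDiff ν β).card ψ ν β hνψ hβfalse hpar hpure rfl
    have hcard₂ : (satSet ψ₂).card = (satSet ψ).card := card_swap hνψ hβfalse hiff
    have hsdiff₂ : satSet ψ₂ \ satSet ψ' = (satSet ψ \ satSet ψ').erase ν := by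
      ext x
      simp only [Finset.mem_sdiff, Finset.mem_erase, mem_satSet, hiff x]
      constructor
      · rintro ⟨⟨hx, hxν⟩ | hx, hx'⟩
        · exact ⟨hxν, hx, hx'⟩
        · subst hx; exact absurd hβψ' hx'
      · rintro ⟨hxν, hx, hx'⟩
        exact ⟨Or.inl ⟨hx, hxν⟩, hx'⟩
    have hνmem : ν ∈ satSet ψ \ satSet ψ' := by
      rw [Finset.mem_sdiff, mem_satSet, mem_satSet]
      exact ⟨hνψ, hνψ'⟩
    have hn₂ : (satSet ψ₂ \ satSet ψ').card = n - 1 := by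
      rw [hsdiff₂, Finset.card_erase_of_mem hνmem, hn]
    have H₂ : ∀ x y : Finset (Fin (k+1)), (ψ₂ x = true ∨ ψ' x = true) →
        (ψ₂ y = true ∨ ψ' y = true) → x.card % 2 = y.card % 2 := by
      have hmem : ∀ x, ψ₂ x = true → ψ x = true ∨ ψ' x = true := by
        intro x hx
        rcases (hiff x).1 hx with ⟨hc, _⟩ | hc
        · exact Or.inl hc
        · subst hc; exact Or.inr hβψ'
      intro x y hx hy
      refine H x y ?_ ?_
      · rcases hx with hx | hx
        · exact hmem x hx
        · exact Or.inr hx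
      · rcases hy with hy | hy
        · exact hmem y hy
        · exact Or.inr hy
    exact equiv_trans hequiv (ih (n - 1) (by omega) ψ₂ ψ' H₂ (hcard₂.trans hcard) hn₂)

lemma eul_pure {ψ : Finset (Fin (k+1)) → Bool} {p : ℕ}
    (h : ∀ x ∈ satSet ψ, x.card % 2 = p) :
    eul ψ = (-1 : ℤ) ^ p * (satSet ψ).card := by
  rw [eul]
  rw [Finset.sum_congr rfl (g := fun _ => (-1 : ℤ) ^ p) ?_]
  · rw [Finset.sum_const, nsmul_eq_mul, mul_comm]
  · intro x hx
    conv_lhs => rw [← Nat.div_add_mod x.card 2]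
    rw [pow_add, pow_mul, h x hx]
    norm_num

end Stmt11Aux5

open Stmt11Aux Stmt11Aux2 Stmt11Aux3 Stmt11Aux4 Stmt11Aux5 in
/-- `eul(φ) = eul(φ')` if and only if `φ ≃ φ'`. -/
theorem stmt11 (k : ℕ) (hk : 1 ≤ k) (φ φ' : Finset (Fin (k + 1)) → Bool) :
    eul φ = eul φ' ↔ EquivPM k φ φ' := by
  constructor
  · intro heul
    obtain ⟨ψ, he1, hp1⟩ := normalize (satSet φ).card φ rfl
    obtain ⟨ψ', he2, hp2⟩ := normalize (satSet φ').card φ' rfl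
    have hψeq : eul ψ = eul ψ' := by
      rw [← eul_eq_of_equiv he1, ← eul_eq_of_equiv he2, heul]
    have hfalse : ∀ (χ : Finset (Fin (k+1)) → Bool) x, satSet χ = ∅ → χ x = false := by
      intro χ x hS
      cases hc : χ x
      · rfl
      · exfalso
        have := mem_satSet.2 hc
        rw [hS] at this
        exact absurd this (Finset.notMem_empty x)
    have heul_empty : ∀ (χ : Finset (Fin (k+1)) → Bool), satSet χ = ∅ → eul χ = 0 := by
      intro χ hS
      rw [eul, hS, Finset.sum_empty]
    have heul_ne : ∀ (χ : Finset (Fin (k+1)) → Bool) x₀, x₀ ∈ satSet χ →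
        (∀ x ∈ satSet χ, ∀ y ∈ satSet χ, x.card % 2 = y.card % 2) → eul χ ≠ 0 := by
      intro χ x₀ hx₀ hp
      have hpure : ∀ x ∈ satSet χ, x.card % 2 = x₀.card % 2 := fun x hx => hp x hx x₀ hx₀
      rw [eul_pure hpure]
      have hc : 0 < (satSet χ).card := Finset.card_pos.2 ⟨x₀, hx₀⟩
      exact mul_ne_zero (pow_ne_zero _ (by norm_num))
        (by exact_mod_cast hc.ne')
    have key : EquivPM k ψ ψ' := by
      rcases Finset.eq_empty_or_nonempty (satSet ψ) with hS | ⟨x₀, hx₀⟩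
      · rcases Finset.eq_empty_or_nonempty (satSet ψ') with hS' | ⟨y₀, hy₀⟩
        · have : ψ = ψ' := by
            funext x
            rw [hfalse ψ x hS, hfalse ψ' x hS']
          rw [this]
          exact Relation.ReflTransGen.refl
        · exfalso
          exact heul_ne ψ' y₀ hy₀ hp2 (by rw [← hψeq]; exact heul_empty ψ hS)
      · rcases Finset.eq_empty_or_nonempty (satSet ψ') with hS' | ⟨y₀, hy₀⟩
        · exfalso
          exact heul_ne ψ x₀ hx₀ hp1 (by rw [hψeq]; exact heul_empty ψ' hS')
        · -- both nonempty
          have hpure1 : ∀ x ∈ satSet ψ, x.card % 2 = x₀.card % 2 :=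
            fun x hx => hp1 x hx x₀ hx₀
          have hpure2 : ∀ x ∈ satSet ψ', x.card % 2 = y₀.card % 2 :=
            fun x hx => hp2 x hx y₀ hy₀
          have he1' := eul_pure hpure1
          have he2' := eul_pure hpure2
          rw [he1', he2'] at hψeq
          have hc1 : 0 < (satSet ψ).card := Finset.card_pos.2 ⟨x₀, hx₀⟩
          have hc2 : 0 < (satSet ψ').card := Finset.card_pos.2 ⟨y₀, hy₀⟩
          have hpp : x₀.card % 2 = y₀.card % 2 ∧ (satSet ψ).card = (satSet ψ').card := by
            rcases Nat.mod_two_eq_zero_or_one x₀.card with hp0 | hp0 <;>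
              rcases Nat.mod_two_eq_zero_or_one y₀.card with hq0 | hq0 <;>
              rw [hp0, hq0] at hψeq ⊢ <;> simp [-Finset.card_eq_zero] at hψeq <;>
              constructor <;> omega
          obtain ⟨hparity, hcards⟩ := hpp
          apply match_pure (satSet ψ \ satSet ψ').card ψ ψ' ?_ hcards rfl
          intro x y hx hy
          have hval : ∀ z : Finset (Fin (k+1)), (ψ z = true ∨ ψ' z = true) →
              z.card % 2 = x₀.card % 2 := by
            intro z hz
            rcases hz with hz | hz
            · exact hpure1 z (mem_satSet.2 hz)
            · rw [hpure2 z (mem_satSet.2 hz), hparity]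
          rw [hval x hx, hval y hy]
    exact equiv_trans he1 (equiv_trans key (equiv_symm he2))
  · exact eul_eq_of_equiv
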